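/- Let p be an odd prime, and assume D is a p-group and I is nontrivial, with the decomposition I = I_1 × ⋯ × I_s chosen so that every I_l is a nontrivial cyclic group (so s is the p-rank of I). Let ψ : G → \bar{ℚ}_p^× be a group character that is nontrivial on D, let O_ψ = ℤ_p[ψ(G)], and let ψ also denote the induced ring homomorphism ℤ_p[G] → O_ψ. Then the ideal of O_ψ generated by ψ(𝓙) equals the (s−1)-st power of the ideal of O_ψ generated by ψ(𝓘_D): ψ(𝓙)·O_ψ = (ψ(𝓘_D)·O_ψ)^{s−1}. -/

import Mathlib

open MonoidAlgebra Finset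

/-- The sum `ν_H = Σ_{σ ∈ H} σ` of the elements of a subgroup `H` in the group algebra. -/
noncomputable def nuElt (R : Type) [CommRing R] {G : Type} [CommGroup G] [Fintype G]
    (H : Subgroup G) : MonoidAlgebra R G :=
  letI := Classical.decPred (· ∈ H)
  ∑ σ ∈ Finset.univ.filter (· ∈ H), MonoidAlgebra.of R G σ

/-- `I = I_1 × ⋯ × I_s` where `I_l` is the cyclic subgroup generated by `σ l`:
every element of `I` is, in a unique way, the product of elements of the subgroups
`⟨σ l⟩`. -/
def IsDecomp {G : Type} [CommGroup G] (I : Subgroup G) {s : ℕ} (σ : Fin s → G) : Prop :=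
  (∀ l, σ l ∈ I) ∧
    ∀ g ∈ I, ∃! x : ∀ l, Subgroup.zpowers (σ l), (∏ l, ((x l : G))) = g

/-- The ideal `Z_i ⊆ R[G]` generated by the products `ν_{l_1} ⋯ ν_{l_{s-i}}` over all
`(s-i)`-element subsets `{l_1 < ⋯ < l_{s-i}}` of `{1, …, s}`. -/
noncomputable def ZidealR (R : Type) [CommRing R] {G : Type} [CommGroup G] [Fintype G]
    {s : ℕ} (σ : Fin s → G) (i : ℕ) : Ideal (MonoidAlgebra R G) :=
  Ideal.span {x | ∃ T : Finset (Fin s), T.card = s - i ∧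
    x = ∏ l ∈ T, nuElt R (Subgroup.zpowers (σ l))}

/-- The ideal `𝓘_H = ker(R[G] → R[G/H])`. -/
noncomputable def kerIdealR (R : Type) [CommRing R] {G : Type} [CommGroup G] [Fintype G]
    (H : Subgroup G) : Ideal (MonoidAlgebra R G) :=
  RingHom.ker (MonoidAlgebra.mapDomainRingHom R (QuotientGroup.mk' H))

/-- `g - 1` lies in `𝓘_H` for `g ∈ H`. -/
lemma of_sub_one_mem_kerIdealR (p : ℕ) [Fact p.Prime] {G : Type} [CommGroup G] [Fintype G]
    (H : Subgroup G) (d : G) (hd : d ∈ H) :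
    MonoidAlgebra.of ℤ_[p] G d - 1 ∈ kerIdealR ℤ_[p] H := by
  rw [kerIdealR, RingHom.mem_ker, map_sub, map_one]
  have h : (↑d : G ⧸ H) = 1 := (QuotientGroup.eq_one_iff d).2 hd
  simp [MonoidAlgebra.of_apply, MonoidAlgebra.mapDomainRingHom, h, MonoidAlgebra.one_def]

/-- for `p` an odd prime, `D` a `p`-group, `I` nontrivial with a
decomposition `I = I_1 × ⋯ × I_s` into nontrivial cyclic subgroups (`s` the `p`-rank of
`I`), and `ψ` a character of `G`, nontrivial on `D`, with values in (the units of) the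
domain `O_ψ = ℤ_p[ψ(G)]`, one has `ψ(𝓙)·O_ψ = (ψ(𝓘_D)·O_ψ)^{s−1}`, where `ψ` also
denotes the induced ring homomorphism `ℤ_p[G] → O_ψ`. -/
theorem statement17 (p : ℕ) [Fact p.Prime] (hp2 : p ≠ 2)
    {G : Type} [CommGroup G] [Fintype G] (I D : Subgroup G) (hID : I ≤ D)
    (φt : G) (hφt : φt ∈ D) (hφgen : ∀ d ∈ D, ∃ n : ℤ, φt ^ n * d⁻¹ ∈ I)
    (hD : IsPGroup p ↥D) (hInontriv : I ≠ ⊥)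
    {s : ℕ} (σ : Fin s → G) (hdec : IsDecomp I σ) (hnt : ∀ l, σ l ≠ 1)
    (O : Type) [CommRing O] [IsDomain O] [Algebra ℤ_[p] O]
    (ψ : G →* Oˣ) (hψD : ∃ d ∈ D, ψ d ≠ 1)
    (hadj : Algebra.adjoin ℤ_[p] (Set.range fun g : G => ((ψ g : Oˣ) : O)) = ⊤) :
    Ideal.map (MonoidAlgebra.lift ℤ_[p] O G ((Units.coeHom O).comp ψ)).toRingHom
        (∑ i ∈ Finset.range s, ZidealR ℤ_[p] σ (i + 1) * (kerIdealR ℤ_[p] D) ^ i)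
      = (Ideal.map (MonoidAlgebra.lift ℤ_[p] O G ((Units.coeHom O).comp ψ)).toRingHom
          (kerIdealR ℤ_[p] D)) ^ (s - 1) := by
  set f := (MonoidAlgebra.lift ℤ_[p] O G ((Units.coeHom O).comp ψ)).toRingHom with hf
  set K := Ideal.map f (kerIdealR ℤ_[p] D) with hK
  have hfof : ∀ g : G, f (MonoidAlgebra.of ℤ_[p] G g) = ((ψ g : Oˣ) : O) := by
    intro g; simp [hf, MonoidAlgebra.lift_of]
  -- ψ d - 1 ∈ K for d ∈ D
  have hsub : ∀ d ∈ D, ((ψ d : Oˣ) : O) - 1 ∈ K := by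
    intro d hd
    have := Ideal.mem_map_of_mem f (of_sub_one_mem_kerIdealR p D d hd)
    rwa [map_sub, map_one, hfof] at this
  -- (p : O) ∈ K
  have hpK : (p : O) ∈ K := by
    obtain ⟨d₀, hd₀D, hd₀⟩ := hψD
    have key : ∀ m : ℕ, ∀ d : G, d ∈ D → ((ψ d : Oˣ) : O) ≠ 1 →
        ((ψ d : Oˣ) : O) ^ (p ^ m) = 1 → (p : O) ∈ K := by
      intro m
      induction m with
      | zero => intro d hd hne h1; simp at h1; exact absurd (by rw [h1]; rfl) hne
      | succ m ih =>
        intro d hd hne h1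
        by_cases hc : ((ψ (d ^ p) : Oˣ) : O) = 1
        · -- geometric series argument
          set u := ((ψ d : Oˣ) : O) with hu
          have hup : u ^ p = 1 := by
            rw [hu, ← Units.val_pow_eq_pow_val, ← map_pow]; exact hc
          have hsum0 : (∑ j ∈ Finset.range p, u ^ j) = 0 := by
            have hg := geom_sum_mul u p
            rw [hup, sub_self] at hg
            rcases mul_eq_zero.1 hg with h | h
            · exact h
            · exact absurd (sub_eq_zero.1 h) hne
          have hpsum : (p : O) = ∑ j ∈ Finset.range p, (1 - u ^ j) := by
            rw [Finset.sum_sub_distrib, hsum0, sub_zero, Finset.sum_const,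
              Finset.card_range, nsmul_eq_mul, mul_one]
          rw [hpsum]
          refine Ideal.sum_mem _ fun j _ => ?_
          have : u ^ j = ((ψ (d ^ j) : Oˣ) : O) := by
            rw [map_pow, Units.val_pow_eq_pow_val]
          rw [this, ← neg_sub]
          exact neg_mem (hsub _ (pow_mem hd j))
        · refine ih (d ^ p) (pow_mem hd p) hc ?_
          rw [map_pow, Units.val_pow_eq_pow_val, ← pow_mul, ← pow_succ']
          exact h1
    obtain ⟨k, hk⟩ := hD ⟨d₀, hd₀D⟩
    have hk' : ((ψ d₀ : Oˣ) : O) ^ (p ^ k) = 1 := by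
      have : d₀ ^ (p ^ k) = 1 := by
        have := congrArg (Subtype.val) hk
        simpa using this
      rw [← Units.val_pow_eq_pow_val, ← map_pow, this, map_one, Units.val_one]
    have hne : ((ψ d₀ : Oˣ) : O) ≠ 1 := fun h => hd₀ (Units.ext h)
    exact key k d₀ hd₀D hne hk'
  -- Lemma B : f (ν_l) ∈ K
  have hB : ∀ l : Fin s, f (nuElt ℤ_[p] (Subgroup.zpowers (σ l))) ∈ K := by
    intro l
    classical
    have hfnu : f (nuElt ℤ_[p] (Subgroup.zpowers (σ l)))
        = ∑ g ∈ Finset.univ.filter (· ∈ Subgroup.zpowers (σ l)), ((ψ g : Oˣ) : O) := by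
      rw [nuElt, map_sum]
      refine Finset.sum_congr ?_ fun g _ => hfof g
      congr 1
    rw [hfnu]
    by_cases hζ : ψ (σ l) = 1
    · -- ψ trivial on ⟨σ l⟩; sum is the cardinality, a multiple of p
      have hval : ∀ g ∈ Finset.univ.filter (· ∈ Subgroup.zpowers (σ l)),
          ((ψ g : Oˣ) : O) = 1 := by
        intro g hg
        rw [Finset.mem_filter] at hg
        obtain ⟨n, rfl⟩ := hg.2
        rw [map_zpow, hζ, one_zpow, Units.val_one]
      rw [Finset.sum_congr rfl hval, Finset.sum_const, nsmul_eq_mul, mul_one]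
      have hcard : (Finset.univ.filter (· ∈ Subgroup.zpowers (σ l))).card
          = orderOf (σ l) := by
        rw [← Fintype.card_subtype, Fintype.card_zpowers]
      -- p divides orderOf (σ l)
      obtain ⟨k, hk⟩ := hD ⟨σ l, hID (hdec.1 l)⟩
      have hpow : (σ l) ^ (p ^ k) = 1 := by
        have := congrArg (Subtype.val) hk; simpa using this
      obtain ⟨j, hj, horder⟩ := (Nat.dvd_prime_pow (Fact.out : p.Prime)).1
        (orderOf_dvd_of_pow_eq_one hpow)
      have hj0 : j ≠ 0 := by
        rintro rfl
        rw [pow_zero, orderOf_eq_one_iff] at horder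
        exact hnt l horder
      have hdvd : p ∣ (Finset.univ.filter (· ∈ Subgroup.zpowers (σ l))).card := by
        rw [hcard, horder]
        exact dvd_pow_self p hj0
      obtain ⟨t, ht⟩ := hdvd
      rw [ht]
      push_cast
      exact Ideal.mul_mem_right _ _ hpK
    · -- ψ nontrivial on ⟨σ l⟩; the sum is 0
      set S := ∑ g ∈ Finset.univ.filter (· ∈ Subgroup.zpowers (σ l)), ((ψ g : Oˣ) : O)
        with hS
      have hmul : ((ψ (σ l) : Oˣ) : O) * S = S := by
        rw [hS, Finset.mul_sum]
        refine Finset.sum_nbij' (fun g => σ l * g) (fun g => (σ l)⁻¹ * g) ?_ ?_ ?_ ?_ ?_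
        · intro g hg
          rw [Finset.mem_filter] at hg ⊢
          exact ⟨Finset.mem_univ _, mul_mem (Subgroup.mem_zpowers _) hg.2⟩
        · intro g hg
          rw [Finset.mem_filter] at hg ⊢
          exact ⟨Finset.mem_univ _, mul_mem (inv_mem (Subgroup.mem_zpowers _)) hg.2⟩
        · intro g _; group
        · intro g _; group
        · intro g _
          rw [← Units.val_mul, ← map_mul]
      have : (((ψ (σ l) : Oˣ) : O) - 1) * S = 0 := by
        rw [sub_mul, one_mul, hmul, sub_self]
      rcases mul_eq_zero.1 this with h | h
      · exact absurd (Units.ext (sub_eq_zero.1 h)) hζ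
      · rw [h]; exact zero_mem K
  -- s ≥ 1
  have hs : 1 ≤ s := by
    by_contra h
    push_neg at h
    interval_cases s
    obtain ⟨a, ha⟩ := Subgroup.ne_bot_iff_exists_ne_one.1 hInontriv
    obtain ⟨x, hx, -⟩ := hdec.2 a a.2
    rw [Finset.univ_eq_empty, Finset.prod_empty] at hx
    exact ha (by ext; exact hx.symm)
  -- map commutes with finite sums of ideals
  have hmapsum : Ideal.map f (∑ i ∈ Finset.range s,
      ZidealR ℤ_[p] σ (i + 1) * (kerIdealR ℤ_[p] D) ^ i)
      = ∑ i ∈ Finset.range s,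
        Ideal.map f (ZidealR ℤ_[p] σ (i + 1) * (kerIdealR ℤ_[p] D) ^ i) := by
    induction (Finset.range s) using Finset.induction with
    | empty => simp [Ideal.map_bot]
    | insert _ _ h ih =>
      rw [Finset.sum_insert h, Finset.sum_insert h, Submodule.add_eq_sup,
        Submodule.add_eq_sup, Ideal.map_sup, ih]
  refine le_antisymm ?_ ?_
  · rw [hmapsum]
    have hterm : ∀ i ∈ Finset.range s,
        Ideal.map f (ZidealR ℤ_[p] σ (i + 1) * (kerIdealR ℤ_[p] D) ^ i) ≤ K ^ (s - 1) := by
      intro i hi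
      rw [Finset.mem_range] at hi
      rw [Ideal.map_mul, Ideal.map_pow]
      have hsplit : K ^ (s - 1) = K ^ (s - 1 - i) * K ^ i := by
        rw [← pow_add, Nat.sub_add_cancel (Nat.le_sub_one_of_lt hi)]
      rw [hsplit]
      refine Ideal.mul_mono_left ?_
      rw [ZidealR, Ideal.map_span, Ideal.span_le]
      rintro _ ⟨x, ⟨T, hT, rfl⟩, rfl⟩
      rw [map_prod]
      have hTcard : T.card = s - 1 - i := by omega
      have := Ideal.prod_mem_prod (I := fun _ : Fin s => K) (s := T)
        (fun l _ => hB l)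
      rwa [Finset.prod_const, hTcard] at this
    -- sum of ideals each ≤ J is ≤ J
    refine Finset.sum_induction _ (· ≤ K ^ (s - 1)) ?_ ?_ hterm
    · intro a b ha hb
      rw [Submodule.add_eq_sup]
      exact sup_le ha hb
    · exact bot_le
  · have hZtop : ZidealR ℤ_[p] σ s = ⊤ := by
      rw [Ideal.eq_top_iff_one]
      exact Ideal.subset_span ⟨∅, by simp, by simp⟩
    have hle : (kerIdealR ℤ_[p] D) ^ (s - 1)
        ≤ ∑ i ∈ Finset.range s, ZidealR ℤ_[p] σ (i + 1) * (kerIdealR ℤ_[p] D) ^ i := by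
      have h1 : (kerIdealR ℤ_[p] D) ^ (s - 1)
          = ZidealR ℤ_[p] σ ((s - 1) + 1) * (kerIdealR ℤ_[p] D) ^ (s - 1) := by
        rw [Nat.sub_add_cancel hs, hZtop, Ideal.top_mul]
      rw [h1]
      exact Finset.single_le_sum (f := fun i =>
        ZidealR ℤ_[p] σ (i + 1) * (kerIdealR ℤ_[p] D) ^ i)
        (fun i _ => zero_le) (Finset.mem_range.2 (by omega))
    calc K ^ (s - 1) = Ideal.map f ((kerIdealR ℤ_[p] D) ^ (s - 1)) :=
          (Ideal.map_pow f _ _).symm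
      _ ≤ _ := Ideal.map_mono hle
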